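/- Let R be a commutative ring, v ∈ R, and a₁,a₂,a₃,b₁,b₂,b₃,c₁,c₂,c₃ ∈ R with aᵢ·bᵢ = v for i = 1,2,3. Denote by E_{ij}^r the 3×3 elementary matrix I + r·e_{ij}. If E₂₃^{c₁}·E₂₁^{-a₃}·E₁₂^{b₃}·E₃₁^{c₂}·E₃₂^{-a₁}·E₂₃^{b₁}·E₁₂^{c₃}·E₁₃^{-a₂}·E₃₁^{b₂} = I, then cᵢ = -bᵢ for all i, a₁ = b₂b₃, a₂ = b₃b₁, a₃ = b₁b₂, and consequently b₁b₂b₃ = v and a₁a₂a₃ = v². -/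

import Mathlib

/-- The 3×3 elementary matrix `I + r·e_{ij}`. -/
def elemMat {R : Type*} [CommRing R] (i j : Fin 3) (r : R) :
    Matrix (Fin 3) (Fin 3) R :=
  1 + r • Matrix.single i j 1

/-- Monodromy of handle slides around a positive vertex: if the indicated
product of elementary matrices is the identity and aᵢ·bᵢ = v for each i,
then cᵢ = -bᵢ, aᵢ = bⱼ·bₖ (cyclically), b₁b₂b₃ = v and a₁a₂a₃ = v². -/
theorem positive_vertex_monodromy {R : Type*} [CommRing R]
    (v a₁ a₂ a₃ b₁ b₂ b₃ c₁ c₂ c₃ : R)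
    (h1 : a₁ * b₁ = v) (h2 : a₂ * b₂ = v) (h3 : a₃ * b₃ = v)
    (hprod :
      elemMat 1 2 c₁ * elemMat 1 0 (-a₃) * elemMat 0 1 b₃ *
      elemMat 2 0 c₂ * elemMat 2 1 (-a₁) * elemMat 1 2 b₁ *
      elemMat 0 1 c₃ * elemMat 0 2 (-a₂) * elemMat 2 0 b₂ = 1) :
    c₁ = -b₁ ∧ c₂ = -b₂ ∧ c₃ = -b₃ ∧
    a₁ = b₂ * b₃ ∧ a₂ = b₃ * b₁ ∧ a₃ = b₁ * b₂ ∧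
    b₁ * b₂ * b₃ = v ∧ a₁ * a₂ * a₃ = v ^ 2 := by
  have key : ∀ i j : Fin 3,
      (elemMat 1 2 c₁ * elemMat 1 0 (-a₃) * elemMat 0 1 b₃ *
       elemMat 2 0 c₂ * elemMat 2 1 (-a₁) * elemMat 1 2 b₁ *
       elemMat 0 1 c₃ * elemMat 0 2 (-a₂) * elemMat 2 0 b₂) i j
        = (1 : Matrix (Fin 3) (Fin 3) R) i j :=
    fun i j => congrFun (congrFun hprod i) j
  have e01 : c₃ + b₃ = 0 := by
    have h := key 0 1
    simp [elemMat, Matrix.mul_apply, Matrix.one_apply, Fin.sum_univ_three,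
      Matrix.single, Matrix.add_apply, Matrix.smul_apply] at h
    linear_combination h
  have e02 : a₂ = b₃ * b₁ := by
    have h := key 0 2
    simp [elemMat, Matrix.mul_apply, Matrix.one_apply, Fin.sum_univ_three,
      Matrix.single, Matrix.add_apply, Matrix.smul_apply] at h
    linear_combination -h
  have e22 : a₂ * c₂ + a₁ * b₁ = 0 := by
    have h := key 2 2
    simp [elemMat, Matrix.mul_apply, Matrix.one_apply, Fin.sum_univ_three,
      Matrix.single, Matrix.add_apply, Matrix.smul_apply] at h
    linear_combination -h
  have e20 : c₂ + b₂ - a₂ * b₂ * c₂ - a₁ * b₁ * b₂ = 0 := by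
    have h := key 2 0
    simp [elemMat, Matrix.mul_apply, Matrix.one_apply, Fin.sum_univ_three,
      Matrix.single, Matrix.add_apply, Matrix.smul_apply] at h
    linear_combination h
  have e21 : c₂ * c₃ - a₁ = 0 := by
    have h := key 2 1
    simp [elemMat, Matrix.mul_apply, Matrix.one_apply, Fin.sum_univ_three,
      Matrix.single, Matrix.add_apply, Matrix.smul_apply] at h
    linear_combination h
  have e12 : c₁ + b₁ - a₃ * b₁ * b₃ - a₂ * c₁ * c₂ + a₂ * a₃ - a₁ * b₁ * c₁ = 0 := by
    have h := key 1 2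
    simp [elemMat, Matrix.mul_apply, Matrix.one_apply, Fin.sum_univ_three,
      Matrix.single, Matrix.add_apply, Matrix.smul_apply] at h
    linear_combination h
  have e10 : c₁ * c₂ + b₂ * c₁ + b₁ * b₂ - a₃ - a₃ * b₁ * b₂ * b₃
      - a₂ * b₂ * c₁ * c₂ + a₂ * a₃ * b₂ - a₁ * b₁ * b₂ * c₁ = 0 := by
    have h := key 1 0
    simp [elemMat, Matrix.mul_apply, Matrix.one_apply, Fin.sum_univ_three,
      Matrix.single, Matrix.add_apply, Matrix.smul_apply] at h
    linear_combination h
  have hc3 : c₃ = -b₃ := by linear_combination e01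
  have hc2 : c₂ = -b₂ := by linear_combination e20 + b₂ * e22
  have ha1 : a₁ = b₂ * b₃ := by linear_combination -e21 + c₃ * hc2 - b₂ * hc3
  have hc1 : c₁ = -b₁ := by linear_combination e12 - a₃ * e02 + c₁ * e22
  have ha3 : a₃ = b₁ * b₂ := by
    linear_combination -e10 + a₃ * b₂ * e02 - b₂ * c₁ * e22 + c₁ * hc2
  have hv : b₁ * b₂ * b₃ = v := by linear_combination -b₁ * ha1 + h1
  refine ⟨hc1, hc2, hc3, ha1, e02, ha3, hv, ?_⟩
  linear_combination a₂ * a₃ * ha1 + b₂ * b₃ * a₃ * e02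
    + b₂ * b₃ * b₃ * b₁ * ha3 + (b₁ * b₂ * b₃ + v) * hv
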